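/- A convex closed solid set A ⊆ L⁰₊ is convexly compact if and only if it is radially bounded. -/

import Mathlib

open MeasureTheory Filter

variable {Ω : Type*} [MeasurableSpace Ω]

/-- `A ⊆ L⁰₊` is solid: `X ∈ A` and `0 ≤ Y ≤ X` (a.e.) imply `Y ∈ A`. -/
def Solid (P : Measure Ω) (A : Set (Ω → ℝ)) : Prop :=
  ∀ X ∈ A, ∀ Y : Ω → ℝ, (∀ᵐ ω ∂P, 0 ≤ Y ω ∧ Y ω ≤ X ω) → Y ∈ A

/-- Radial boundedness for a set of positive random variables: every ray through a
nonzero element eventually leaves the set. -/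
def RadiallyBoundedPos (P : Measure Ω) (A : Set (Ω → ℝ)) : Prop :=
  ∀ X ∈ A, P {ω | 0 < X ω} ≠ 0 →
    ∃ Λ > (0 : ℝ), ∀ l : ℝ, Λ < l → (fun ω => l * X ω) ∉ A

/-- Tightness (boundedness in probability) for a set of positive random variables. -/
def TightPos (P : Measure Ω) (A : Set (Ω → ℝ)) : Prop :=
  ∀ ε > (0 : ℝ), ∃ M > (0 : ℝ), ∀ X ∈ A, P {ω | M < X ω} < ENNReal.ofReal ε

/-- Radial boundedness for a general set of random variables. -/
def RadiallyBounded (P : Measure Ω) (A : Set (Ω → ℝ)) : Prop :=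
  ∀ X ∈ A, P {ω | X ω ≠ 0} ≠ 0 →
    ∃ Λ > (0 : ℝ), ∀ l : ℝ, Λ < l → (fun ω => l * X ω) ∉ A

/-- Tightness (boundedness in probability) for a general set of random variables. -/
def Tight (P : Measure Ω) (A : Set (Ω → ℝ)) : Prop :=
  ∀ ε > (0 : ℝ), ∃ M > (0 : ℝ), ∀ X ∈ A, P {ω | M < |X ω|} < ENNReal.ofReal ε

/-- Membership in the closure of `A` for the (metrizable) topology of convergence
in probability. -/
def InClosure (P : Measure Ω) (A : Set (Ω → ℝ)) (X : Ω → ℝ) : Prop :=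
  ∃ Y : ℕ → Ω → ℝ, (∀ n, Y n ∈ A) ∧ TendstoInMeasure P Y atTop X

/-- `A` is convexly compact (Žitković): every family of convex, closed (in probability)
subsets of `A` with the finite intersection property has nonempty intersection. -/
def ConvexlyCompact (P : Measure Ω) (A : Set (Ω → ℝ)) : Prop :=
  ∀ (ι : Type) (F : ι → Set (Ω → ℝ)),
    (∀ i, F i ⊆ A) → (∀ i, Convex ℝ (F i)) →
    (∀ i, ∀ X : Ω → ℝ, InClosure P (F i) X → X ∈ F i) →
    (∀ s : Finset ι, (⋂ i ∈ s, F i).Nonempty) →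
    (⋂ i, F i).Nonempty


namespace Stmt9Aux

open Topology
open scoped ENNReal NNReal

set_option linter.unusedSectionVars false

/-- utility -/
noncomputable def u (x : ℝ) : ℝ := x / (1 + x)

lemma u_nonneg {x : ℝ} (hx : 0 ≤ x) : 0 ≤ u x := by
  unfold u; positivity

lemma u_le_one {x : ℝ} (hx : 0 ≤ x) : u x ≤ 1 := by
  unfold u
  rw [div_le_one (by positivity)]; linarith

lemma u_gain {a b M ε : ℝ} (ha : 0 ≤ a) (hb : 0 ≤ b) (haM : a ≤ M) (hbM : b ≤ M)
    (hab : ε ≤ |a - b|) (hε : 0 < ε) :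
    (u a + u b) / 2 + ε ^ 2 / (4 * (1 + M) ^ 3) ≤ u ((a + b) / 2) := by
  have h1 : (1:ℝ)+a ≠ 0 := by positivity
  have h2 : (1:ℝ)+b ≠ 0 := by positivity
  have h3 : (1:ℝ)+(a+b)/2 ≠ 0 := by positivity
  have key : (u a + u b)/2 + (a-b)^2/(4*(1+a)*(1+b)*(1+(a+b)/2)) = u ((a+b)/2) := by
    unfold u; field_simp; ring
  have hε2 : ε ^ 2 ≤ (a - b) ^ 2 := by
    have := abs_nonneg (a - b)
    calc ε ^ 2 ≤ |a-b| ^ 2 := by nlinarith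
    _ = (a-b)^2 := sq_abs _
  have hden : (0:ℝ) < 4*(1+a)*(1+b)*(1+(a+b)/2) := by positivity
  have hden2 : 4*(1+a)*(1+b)*(1+(a+b)/2) ≤ 4*(1+M)^3 := by
    have hM : 0 ≤ M := le_trans ha haM
    have e : 4*(1+M)^3 = 4*(1+M)*(1+M)*(1+M) := by ring
    rw [e]
    gcongr <;> linarith
  have : ε ^ 2 / (4 * (1 + M) ^ 3) ≤ (a-b)^2/(4*(1+a)*(1+b)*(1+(a+b)/2)) := by
    apply div_le_div₀ (by positivity) hε2 hden hden2
  linarith [key]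

lemma u_midpoint {a b : ℝ} (ha : 0 ≤ a) (hb : 0 ≤ b) :
    (u a + u b) / 2 ≤ u ((a + b) / 2) := by
  have h1 : (1:ℝ)+a ≠ 0 := by positivity
  have h2 : (1:ℝ)+b ≠ 0 := by positivity
  have h3 : (1:ℝ)+(a+b)/2 ≠ 0 := by positivity
  have key : (u a + u b)/2 + (a-b)^2/(4*(1+a)*(1+b)*(1+(a+b)/2)) = u ((a+b)/2) := by
    unfold u; field_simp; ring
  have hd : 0 ≤ (a-b)^2/(4*(1+a)*(1+b)*(1+(a+b)/2)) := by positivity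
  linarith [key]

lemma u_measurable : Measurable u :=
  measurable_id.div (measurable_const.add measurable_id)

variable (P : Measure Ω) [IsProbabilityMeasure P]

/-- The functional `J X = E[u(X)]`. -/
noncomputable def J (X : Ω → ℝ) : ℝ := ∫ ω, u (X ω) ∂P

lemma J_integrable {X : Ω → ℝ} (hm : AEMeasurable X P) (hp : ∀ᵐ ω ∂P, 0 ≤ X ω) :
    Integrable (fun ω => u (X ω)) P := by
  refine Integrable.mono' (integrable_const 1) (u_measurable.comp_aemeasurable hm).aestronglyMeasurable ?_
  filter_upwards [hp] with ω hω
  rw [Real.norm_eq_abs, abs_of_nonneg (u_nonneg hω)]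
  exact u_le_one hω

lemma J_nonneg {X : Ω → ℝ} (hp : ∀ᵐ ω ∂P, 0 ≤ X ω) : 0 ≤ J P X := by
  apply integral_nonneg_of_ae
  filter_upwards [hp] with ω hω using u_nonneg hω

lemma J_le_one {X : Ω → ℝ} (hm : AEMeasurable X P) (hp : ∀ᵐ ω ∂P, 0 ≤ X ω) :
    J P X ≤ 1 := by
  have : J P X ≤ ∫ _ω, (1:ℝ) ∂P := by
    apply integral_mono_ae (J_integrable P hm hp) (integrable_const 1)
    filter_upwards [hp] with ω hω using u_le_one hω
  simpa using this


lemma key_estimate {X Z : Ω → ℝ} (hmX : AEMeasurable X P) (hmZ : AEMeasurable Z P)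
    (hpX : ∀ᵐ ω ∂P, 0 ≤ X ω) (hpZ : ∀ᵐ ω ∂P, 0 ≤ Z ω)
    {ε M η : ℝ} (hε : 0 < ε) (hM : 0 < M) (hη : 0 ≤ η)
    (hJ : J P (fun ω => (X ω + Z ω) / 2) ≤ (J P X + J P Z) / 2 + η) :
    P {ω | ε ≤ |X ω - Z ω|}
      ≤ ENNReal.ofReal (η / (ε ^ 2 / (4 * (1 + M) ^ 3)))
        + (P {ω | M < X ω} + P {ω | M < Z ω}) := by
  set δ : ℝ := ε ^ 2 / (4 * (1 + M) ^ 3) with hδdef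
  have hδ : 0 < δ := by positivity
  have hmX' : Measurable (hmX.mk X) := hmX.measurable_mk
  have hmZ' : Measurable (hmZ.mk Z) := hmZ.measurable_mk
  set G : Set Ω := {ω | ε ≤ |hmX.mk X ω - hmZ.mk Z ω|} ∩ ({ω | hmX.mk X ω ≤ M} ∩ {ω | hmZ.mk Z ω ≤ M}) with hGdef
  have hG : MeasurableSet G := by
    refine (measurableSet_le measurable_const (hmX'.sub hmZ').abs).inter
      ((measurableSet_le hmX' measurable_const).inter (measurableSet_le hmZ' measurable_const))
  -- pointwise inequality
  have hpt : ∀ᵐ ω ∂P, δ * G.indicator (fun _ => (1:ℝ)) ω + (u (X ω) + u (Z ω)) / 2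
      ≤ u ((X ω + Z ω) / 2) := by
    filter_upwards [hpX, hpZ, hmX.ae_eq_mk, hmZ.ae_eq_mk] with ω h1 h2 e1 e2
    by_cases hωG : ω ∈ G
    · rw [Set.indicator_of_mem hωG]
      obtain ⟨hd, hxM, hzM⟩ := hωG
      simp only [Set.mem_setOf_eq] at hd hxM hzM
      rw [← e1] at hxM hd
      rw [← e2] at hzM hd
      have := u_gain h1 h2 hxM hzM hd hε
      linarith
    · rw [Set.indicator_of_notMem hωG]
      have := u_midpoint h1 h2
      linarith
  -- integrate
  have hint1 : Integrable (fun ω => δ * G.indicator (fun _ => (1:ℝ)) ω) P := by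
    exact (((integrable_const (1:ℝ)).indicator hG).const_mul δ)
  have hintX := J_integrable P hmX hpX
  have hintZ := J_integrable P hmZ hpZ
  have hintmid : Integrable (fun ω => u ((X ω + Z ω) / 2)) P := by
    refine J_integrable P ?_ ?_
    · exact ((hmX.add hmZ).div_const 2)
    · filter_upwards [hpX, hpZ] with ω h1 h2; positivity
  have hmono : ∫ ω, (δ * G.indicator (fun _ => (1:ℝ)) ω + (u (X ω) + u (Z ω)) / 2) ∂P
      ≤ J P (fun ω => (X ω + Z ω) / 2) := by
    have h2 : Integrable (fun ω => (u (X ω) + u (Z ω)) / 2) P := by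
      exact (hintX.add hintZ).div_const 2
    exact integral_mono_ae (hint1.add h2) hintmid hpt
  have hcomp : ∫ ω, (δ * G.indicator (fun _ => (1:ℝ)) ω + (u (X ω) + u (Z ω)) / 2) ∂P
      = δ * (P G).toReal + (J P X + J P Z) / 2 := by
    have h2 : Integrable (fun ω => (u (X ω) + u (Z ω)) / 2) P := by
      exact (hintX.add hintZ).div_const 2
    rw [integral_add hint1 h2]
    congr 1
    · rw [integral_const_mul, integral_indicator_const (1:ℝ) hG]
      simp [mul_comm, Measure.real]
    · rw [integral_div, integral_add hintX hintZ]
      rfl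
  have hGle : (P G).toReal ≤ η / δ := by
    rw [hcomp] at hmono
    have h2 : δ * (P G).toReal ≤ η := by linarith
    rw [le_div_iff₀ hδ]
    linarith [mul_comm δ (P G).toReal]
  have hGle' : P G ≤ ENNReal.ofReal (η / δ) := by
    rw [ENNReal.le_ofReal_iff_toReal_le (measure_ne_top P G) (by positivity)]
    exact hGle
  -- set inclusion up to null sets
  have hsub : P {ω | ε ≤ |X ω - Z ω|} ≤ P (G ∪ ({ω | M < X ω} ∪ {ω | M < Z ω})) := by
    apply measure_mono_ae
    filter_upwards [hmX.ae_eq_mk, hmZ.ae_eq_mk] with ω e1 e2 hω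
    by_cases hx : X ω ≤ M
    · by_cases hz : Z ω ≤ M
      · left
        refine ⟨?_, ?_, ?_⟩ <;> simp only [Set.mem_setOf_eq, ← e1, ← e2]
        · exact hω
        · exact hx
        · exact hz
      · right; right; exact lt_of_not_ge hz
    · right; left; exact lt_of_not_ge hx
  calc P {ω | ε ≤ |X ω - Z ω|} ≤ P (G ∪ ({ω | M < X ω} ∪ {ω | M < Z ω})) := hsub
    _ ≤ P G + P ({ω | M < X ω} ∪ {ω | M < Z ω}) := measure_union_le _ _
    _ ≤ P G + (P {ω | M < X ω} + P {ω | M < Z ω}) := by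
        gcongr; exact measure_union_le _ _
    _ ≤ ENNReal.ofReal (η / δ) + (P {ω | M < X ω} + P {ω | M < Z ω}) := by gcongr

lemma meas_lt_congr (P : Measure Ω) {f g : Ω → ℝ} (h : f =ᵐ[P] g) (t : ℝ) :
    P {ω | t < f ω} = P {ω | t < g ω} := by
  apply measure_congr
  filter_upwards [h] with ω hω
  change (t < f ω) = (t < g ω)
  rw [hω]

lemma tight_of_radiallyBounded (P : Measure Ω) [IsProbabilityMeasure P] (A : Set (Ω → ℝ))
    (hL0 : ∀ X ∈ A, AEMeasurable X P) (hpos : ∀ X ∈ A, ∀ᵐ ω ∂P, 0 ≤ X ω)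
    (hconv : Convex ℝ A) (hsolid : Solid P A) (hrb : RadiallyBoundedPos P A) :
    TightPos P A := by
  by_contra hnt
  unfold TightPos at hnt
  push_neg at hnt
  obtain ⟨ε₀, hε₀, hbad⟩ := hnt
  -- the sup function
  set s : ℝ → ℝ := fun M => sSup ((fun X => (P {ω | M < X ω}).toReal) '' A) with hsdef
  have hAne : A.Nonempty := by
    obtain ⟨X, hX, -⟩ := hbad 1 one_pos
    exact ⟨X, hX⟩
  have himne : ∀ M : ℝ, ((fun X => (P {ω | M < X ω}).toReal) '' A).Nonempty :=
    fun M => hAne.image _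
  have himbdd : ∀ M : ℝ, BddAbove ((fun X => (P {ω | M < X ω}).toReal) '' A) := by
    intro M
    refine ⟨1, ?_⟩
    rintro r ⟨X, hX, rfl⟩
    have h1 : P {ω | M < X ω} ≤ 1 := prob_le_one
    have := ENNReal.toReal_mono ENNReal.one_ne_top h1
    simpa using this
  have hs_mem_le : ∀ (M : ℝ), ∀ X ∈ A, (P {ω | M < X ω}).toReal ≤ s M := by
    intro M X hX
    exact le_csSup (himbdd M) ⟨X, hX, rfl⟩
  have hs_anti : Antitone s := by
    intro M M' hMM'
    apply csSup_le (himne M')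
    rintro r ⟨X, hX, rfl⟩
    calc (P {ω | M' < X ω}).toReal ≤ (P {ω | M < X ω}).toReal := by
          apply ENNReal.toReal_mono (measure_ne_top _ _)
          apply measure_mono
          intro ω hω
          exact lt_of_le_of_lt hMM' hω
      _ ≤ s M := hs_mem_le M X hX
  -- lower bound ε₀ at every level
  have hs_lb : ∀ M > (0:ℝ), ε₀ ≤ s M := by
    intro M hM
    obtain ⟨X, hX, hge⟩ := hbad M hM
    have : ε₀ ≤ (P {ω | M < X ω}).toReal := by
      have h1 : (ENNReal.ofReal ε₀).toReal ≤ (P {ω | M < X ω}).toReal :=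
        ENNReal.toReal_mono (measure_ne_top _ _) hge
      rwa [ENNReal.toReal_ofReal hε₀.le] at h1
    exact this.trans (hs_mem_le M X hX)
  -- β = inf of s over positive reals
  set β : ℝ := sInf (s '' Set.Ioi 0) with hβdef
  have hβbdd : BddBelow (s '' Set.Ioi 0) := by
    refine ⟨ε₀, ?_⟩
    rintro r ⟨M, hM, rfl⟩
    exact hs_lb M hM
  have hβne : (s '' Set.Ioi 0).Nonempty := ⟨s 1, 1, Set.mem_Ioi.mpr one_pos, rfl⟩
  have hβpos : 0 < β := lt_of_lt_of_le hε₀ (le_csInf hβne (by rintro r ⟨M, hM, rfl⟩; exact hs_lb M hM))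
  have hβle : ∀ M > (0:ℝ), β ≤ s M := fun M hM => csInf_le hβbdd ⟨M, hM, rfl⟩
  -- error scale
  set e : ℕ → ℝ := fun n => (1/2 : ℝ) ^ n with hedef
  have hepos : ∀ n, 0 < e n := fun n => by positivity
  -- choose thresholds cₙ with s cₙ < β + e n
  have hc : ∀ n : ℕ, ∃ M > (0:ℝ), s M < β + e n := by
    intro n
    have : β < β + e n := by linarith [hepos n]
    obtain ⟨r, ⟨M, hM, rfl⟩, hr⟩ := exists_lt_of_csInf_lt hβne this
    exact ⟨M, hM, hr⟩
  choose c hcpos hcs using hc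
  -- monotone thresholds M with M n ≥ n+1, M n ≥ c n
  set M : ℕ → ℝ := fun n => Nat.rec (max (c 0) 1) (fun k Mk => max (c (k+1)) (max (Mk + 1) (k+2))) n
    with hMdef
  have hMstep : ∀ n, M (n+1) = max (c (n+1)) (max (M n + 1) (n+2)) := fun n => rfl
  have hM0 : M 0 = max (c 0) 1 := rfl
  have hMge : ∀ n, c n ≤ M n := by
    intro n
    cases n with
    | zero => rw [hM0]; exact le_max_left _ _
    | succ k => rw [hMstep]; exact le_max_left _ _
  have hMpos : ∀ n, 0 < M n := fun n => lt_of_lt_of_le (hcpos n) (hMge n)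
  have hMmono : ∀ n, M n ≤ M (n+1) := by
    intro n
    rw [hMstep]
    calc M n ≤ M n + 1 := by linarith
      _ ≤ max (M n + 1) (n+2) := le_max_left _ _
      _ ≤ _ := le_max_right _ _
  have hMlarge : ∀ n : ℕ, (n:ℝ) + 1 ≤ M n := by
    intro n
    cases n with
    | zero => rw [hM0]; simpa using le_max_right (c 0) 1
    | succ k =>
        rw [hMstep]
        push_cast
        calc ((k:ℝ) + 1) + 1 ≤ (k:ℝ) + 2 := by linarith
          _ ≤ max (M k + 1) (k+2) := by
              refine le_trans ?_ (le_max_right _ _)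
              push_cast; linarith
          _ ≤ _ := le_max_right _ _
  have hsM : ∀ n, s (M n) < β + e n :=
    fun n => lt_of_le_of_lt (hs_anti (hMge n)) (hcs n)
  -- choose fₙ ∈ A with P(fₙ > 2 Mₙ) > β - eₙ
  have hf : ∀ n : ℕ, ∃ X ∈ A, β - e n < (P {ω | 2 * M n < X ω}).toReal := by
    intro n
    have h1 : β - e n < s (2 * M n) := by
      have := hβle (2 * M n) (by linarith [hMpos n])
      linarith [hepos n]
    obtain ⟨r, ⟨X, hX, rfl⟩, hr⟩ := exists_lt_of_lt_csSup (himne _) h1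
    exact ⟨X, hX, hr⟩
  choose f hfA hflb using hf
  have hfm : ∀ n, AEMeasurable (f n) P := fun n => hL0 _ (hfA n)
  set f' : ℕ → Ω → ℝ := fun n => (hfm n).mk (f n) with hf'def
  have hf'meas : ∀ n, Measurable (f' n) := fun n => (hfm n).measurable_mk
  set U : ℕ → Set Ω := fun n => {ω | 2 * M n < f' n ω} with hUdef
  have hUmeas : ∀ n, MeasurableSet (U n) :=
    fun n => measurableSet_lt measurable_const (hf'meas n)
  have hUlb : ∀ n, β - e n < (P (U n)).toReal := by
    intro n
    have := meas_lt_congr P ((hfm n).ae_eq_mk) (2 * M n)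
    rw [hUdef]
    rw [← this]
    exact hflb n
  -- union bound: P(U k ∪ U (k+1)) ≤ s (M k) < β + e k
  have hUub : ∀ k, (P (U k ∪ U (k+1))).toReal < β + e k := by
    intro k
    set g : Ω → ℝ := fun ω => (1/2 : ℝ) * f k ω + (1/2 : ℝ) * f (k+1) ω with hgdef
    have hgA : g ∈ A := hconv (hfA k) (hfA (k+1)) (by norm_num) (by norm_num) (by norm_num)
    have hsub : P (U k ∪ U (k+1)) ≤ P {ω | M k < g ω} := by
      apply measure_mono_ae
      filter_upwards [(hfm k).ae_eq_mk, (hfm (k+1)).ae_eq_mk, hpos _ (hfA k),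
        hpos _ (hfA (k+1))] with ω e1 e2 p1 p2 hω
      rcases hω with hω | hω
      · have h1 : 2 * M k < f k ω := by rw [e1]; exact hω
        show M k < g ω
        rw [hgdef]; simp only; linarith
      · have h1 : 2 * M (k+1) < f (k+1) ω := by rw [e2]; exact hω
        have h2 : 2 * M k ≤ 2 * M (k+1) := by linarith [hMmono k]
        show M k < g ω
        rw [hgdef]; simp only; linarith
    calc (P (U k ∪ U (k+1))).toReal ≤ (P {ω | M k < g ω}).toReal :=
          ENNReal.toReal_mono (measure_ne_top _ _) hsub
      _ ≤ s (M k) := hs_mem_le _ _ hgA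
      _ < β + e k := hsM k
  -- choose n₀ with small error
  obtain ⟨n₀, hn₀⟩ : ∃ n : ℕ, (1/2:ℝ) ^ n < β / 4 := by
    apply exists_pow_lt_of_lt_one (by linarith) (by norm_num)
  -- decreasing intersections
  set D : ℕ → Set Ω := fun m => ⋂ k ∈ Finset.range (m+1), U (n₀ + k) with hDdef
  have hDmeas : ∀ m, MeasurableSet (D m) := by
    intro m
    exact Finset.measurableSet_biInter _ (fun k _ => hUmeas (n₀ + k))
  have hDU : ∀ m, D m ⊆ U (n₀ + m) := by
    intro m
    apply Set.biInter_subset_of_mem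
    exact Finset.self_mem_range_succ m
  have hDsucc : ∀ m, D (m+1) = U (n₀ + (m+1)) ∩ D m := by
    intro m
    rw [hDdef]
    simp only
    rw [Finset.range_add_one, Finset.set_biInter_insert]
  have hDanti : Antitone D := by
    apply antitone_nat_of_succ_le
    intro m
    rw [hDsucc]
    exact Set.inter_subset_right
  have epow : ∀ j : ℕ, e j = 2 * e (j+1) := by
    intro j
    rw [hedef]
    simp only
    rw [pow_succ]
    ring
  have hDlb : ∀ m, β - e n₀ - 3 * (e n₀ - e (n₀ + m)) ≤ (P (D m)).toReal := by
    intro m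
    induction m with
    | zero =>
        have hD0 : D 0 = U n₀ := by
          rw [hDdef]; simp
        rw [hD0]
        simpa using (hUlb n₀).le
    | succ m ih =>
        have key := measure_union_add_inter' (μ := P) (hUmeas (n₀ + (m+1))) (D m)
        have hfin1 : P (U (n₀ + (m+1)) ∪ D m) ≠ ⊤ := measure_ne_top _ _
        have hfin2 : P (U (n₀ + (m+1)) ∩ D m) ≠ ⊤ := measure_ne_top _ _
        have key' : (P (U (n₀ + (m+1)) ∪ D m)).toReal + (P (U (n₀ + (m+1)) ∩ D m)).toReal
            = (P (U (n₀ + (m+1)))).toReal + (P (D m)).toReal := by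
          rw [← ENNReal.toReal_add hfin1 hfin2, ← ENNReal.toReal_add (measure_ne_top _ _) (measure_ne_top _ _), key]
        have hub : (P (U (n₀ + (m+1)) ∪ D m)).toReal < β + e (n₀ + m) := by
          have hsub2 : U (n₀ + (m+1)) ∪ D m ⊆ U (n₀ + m) ∪ U ((n₀ + m) + 1) := by
            apply Set.union_subset
            · intro ω hω; right; exact hω
            · intro ω hω; left; exact hDU m hω
          calc (P (U (n₀ + (m+1)) ∪ D m)).toReal
              ≤ (P (U (n₀ + m) ∪ U ((n₀ + m) + 1))).toReal :=
                ENNReal.toReal_mono (measure_ne_top _ _) (measure_mono hsub2)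
            _ < β + e (n₀ + m) := hUub (n₀ + m)
        have hulb := hUlb (n₀ + (m+1))
        rw [hDsucc]
        have e1 : e (n₀ + m) = 2 * e (n₀ + m + 1) := epow (n₀ + m)
        have e2 : e (n₀ + (m+1)) = e ((n₀ + m) + 1) := rfl
        rw [e2] at hulb ⊢
        linarith [key', hub, hulb, ih]
  have hDlb' : ∀ m, ENNReal.ofReal (β - 4 * e n₀) ≤ P (D m) := by
    intro m
    apply ENNReal.ofReal_le_of_le_toReal
    have h1 : 0 < e (n₀ + m) := hepos _
    have h2 : e (n₀ + m) ≤ e n₀ := by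
      rw [hedef]
      apply pow_le_pow_of_le_one (by norm_num) (by norm_num)
      exact Nat.le_add_right _ _
    linarith [hDlb m]
  set E : Set Ω := ⋂ m, D m with hEdef
  have hPE : ENNReal.ofReal (β - 4 * e n₀) ≤ P E := by
    have htend := tendsto_measure_iInter_atTop (μ := P)
      (fun m => (hDmeas m).nullMeasurableSet) hDanti ⟨0, measure_ne_top _ _⟩
    exact ge_of_tendsto' htend (fun m => hDlb' m)
  have hβ4 : 0 < β - 4 * e n₀ := by
    have he' : e n₀ = (1/2:ℝ)^n₀ := rfl
    linarith [hn₀, he' ▸ hn₀]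
  have hPEpos : P E ≠ 0 := by
    intro h0
    rw [h0] at hPE
    exact (ENNReal.ofReal_pos.mpr hβ4).ne' (le_antisymm hPE zero_le)
  have hEU : ∀ k, E ⊆ U (n₀ + k) := by
    intro k
    intro ω hω
    have : ω ∈ D k := Set.mem_iInter.mp hω k
    exact hDU k this
  -- every multiple of the indicator of E is in A
  have hEc : ∀ c : ℝ, 0 ≤ c → (fun ω => E.indicator (fun _ => c) ω) ∈ A := by
    intro c hc0
    obtain ⟨k, hk⟩ := exists_nat_ge c
    refine hsolid (f (n₀ + k)) (hfA _) _ ?_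
    filter_upwards [hpos _ (hfA (n₀ + k)), (hfm (n₀ + k)).ae_eq_mk] with ω hp e1
    constructor
    · by_cases hω : ω ∈ E
      · rw [Set.indicator_of_mem hω]; exact hc0
      · rw [Set.indicator_of_notMem hω]
    · by_cases hω : ω ∈ E
      · rw [Set.indicator_of_mem hω]
        have h1 : ω ∈ U (n₀ + k) := hEU k hω
        have h2 : 2 * M (n₀ + k) < f' (n₀ + k) ω := h1
        have h3 : c ≤ 2 * M (n₀ + k) := by
          have := hMlarge (n₀ + k)
          have hcast : (k:ℝ) ≤ ((n₀ + k : ℕ) : ℝ) := by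
            push_cast; linarith [Nat.cast_nonneg (α := ℝ) n₀]
          have hMp := hMpos (n₀ + k)
          linarith
        rw [e1]
        linarith
      · rw [Set.indicator_of_notMem hω]
        exact hp
  -- contradiction with radial boundedness
  set X : Ω → ℝ := fun ω => E.indicator (fun _ => (1:ℝ)) ω with hXdef
  have hXA : X ∈ A := hEc 1 one_pos.le
  have hXset : {ω | 0 < X ω} = E := by
    ext ω
    simp only [Set.mem_setOf_eq, hXdef]
    by_cases hω : ω ∈ E
    · simp [Set.indicator_of_mem hω, hω]
    · simp [Set.indicator_of_notMem hω, hω]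
  have hXne : P {ω | 0 < X ω} ≠ 0 := by rw [hXset]; exact hPEpos
  obtain ⟨Λ, hΛ, hout⟩ := hrb X hXA hXne
  apply hout (Λ + 1) (by linarith)
  have heq : (fun ω => (Λ + 1) * X ω) = fun ω => E.indicator (fun _ => (Λ + 1 : ℝ)) ω := by
    funext ω
    by_cases hω : ω ∈ E
    · simp [hXdef, Set.indicator_of_mem hω]
    · simp [hXdef, Set.indicator_of_notMem hω]
  rw [heq]
  exact hEc (Λ + 1) (by linarith)


lemma exists_ofReal_le {ρ : ℝ≥0∞} (h : 0 < ρ) : ∃ r > (0:ℝ), ENNReal.ofReal r ≤ ρ := by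
  by_cases hρ : ρ = ⊤
  · exact ⟨1, one_pos, by simp [hρ]⟩
  · have hpos := ENNReal.toReal_pos h.ne' hρ
    refine ⟨ρ.toReal / 2, by linarith, ?_⟩
    rw [ENNReal.ofReal_le_iff_le_toReal hρ]
    linarith
  
lemma tendsto_zero_of_forall {g : ℕ → ℝ≥0∞}
    (h : ∀ ρ > (0:ℝ), ∃ N, ∀ n ≥ N, g n ≤ ENNReal.ofReal ρ) :
    Tendsto g atTop (𝓝 0) := by
  rw [ENNReal.tendsto_atTop_zero]
  intro ρ hρ
  obtain ⟨r, hr, hrρ⟩ := exists_ofReal_le hρ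
  obtain ⟨N, hN⟩ := h r hr
  exact ⟨N, fun n hn => (hN n hn).trans hrρ⟩

lemma tendstoInMeasure_of_close (P : Measure Ω) {X Z : ℕ → Ω → ℝ} {L : Ω → ℝ}
    (hXL : TendstoInMeasure P X atTop L)
    (hclose : ∀ ε > (0:ℝ), Tendsto (fun n => P {ω | ε ≤ |X n ω - Z n ω|}) atTop (𝓝 0)) :
    TendstoInMeasure P Z atTop L := by
  rw [tendstoInMeasure_iff_dist] at hXL ⊢
  intro ε hε
  have hsum : Tendsto (fun n => P {ω | ε/2 ≤ |X n ω - Z n ω|}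
      + P {ω | ε/2 ≤ dist (X n ω) (L ω)}) atTop (𝓝 0) := by
    have := (hclose (ε/2) (by linarith)).add (hXL (ε/2) (by linarith))
    simpa using this
  have hle : ∀ n, P {ω | ε ≤ dist (Z n ω) (L ω)}
      ≤ P {ω | ε/2 ≤ |X n ω - Z n ω|} + P {ω | ε/2 ≤ dist (X n ω) (L ω)} := by
    intro n
    refine le_trans (measure_mono ?_) (measure_union_le _ _)
    intro ω hω
    simp only [Set.mem_setOf_eq, Set.mem_union, Real.dist_eq] at hω ⊢
    by_cases h1 : ε/2 ≤ |X n ω - Z n ω|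
    · left; exact h1
    · right
      push_neg at h1
      have := abs_sub_abs_le_abs_sub (Z n ω - L ω) (Z n ω - X n ω)
      have h2 : |Z n ω - X n ω| = |X n ω - Z n ω| := abs_sub_comm _ _
      have h3 : |Z n ω - L ω - (Z n ω - X n ω)| = |X n ω - L ω| := by
        congr 1; ring
      rw [h2, h3] at this
      linarith
  exact tendsto_of_tendsto_of_tendsto_of_le_of_le tendsto_const_nhds hsum
    (fun n => zero_le) hle

lemma exists_tendstoInMeasure_of_cauchy (P : Measure Ω) [IsProbabilityMeasure P]
    {X : ℕ → Ω → ℝ} (hm : ∀ n, AEMeasurable (X n) P)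
    (hc : ∀ ε > (0:ℝ), ∀ ρ > (0:ℝ), ∃ N, ∀ m ≥ N, ∀ n ≥ N,
      P {ω | ε ≤ |X n ω - X m ω|} ≤ ENNReal.ofReal ρ) :
    ∃ L : Ω → ℝ, TendstoInMeasure P X atTop L := by
  classical
  have hc2 : ∀ k : ℕ, ∃ N, ∀ m ≥ N, ∀ n ≥ N,
      P {ω | (1/2:ℝ)^k ≤ |X n ω - X m ω|} ≤ ENNReal.ofReal ((1/2:ℝ)^k) :=
    fun k => hc _ (by positivity) _ (by positivity)
  choose N hN using hc2
  set φ : ℕ → ℕ := fun k => Nat.rec (N 0) (fun k nk => max (nk+1) (N (k+1))) k with hφdef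
  have hφsucc : ∀ k, φ (k+1) = max (φ k + 1) (N (k+1)) := fun k => rfl
  have hφN : ∀ k, N k ≤ φ k := by
    intro k
    cases k with
    | zero => exact le_refl _
    | succ j => rw [hφsucc]; exact le_max_right _ _
  have hφlt : ∀ k, φ k < φ (k+1) := by
    intro k
    rw [hφsucc]
    exact lt_of_lt_of_le (Nat.lt_succ_self _) (le_max_left _ _)
  have hφmono : StrictMono φ := strictMono_nat_of_lt_succ hφlt
  have hφge : ∀ k, k ≤ φ k := fun k => hφmono.le_apply
  set E : ℕ → Set Ω := fun k => {ω | (1/2:ℝ)^k ≤ |X (φ (k+1)) ω - X (φ k) ω|} with hEdef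
  have hPE : ∀ k, P (E k) ≤ ENNReal.ofReal ((1/2:ℝ)^k) := by
    intro k
    exact hN k (φ k) (hφN k) (φ (k+1)) (le_trans (hφN k) (hφlt k).le)
  have hsummable : Summable (fun k : ℕ => (1/2:ℝ)^k) :=
    summable_geometric_of_lt_one (by norm_num) (by norm_num)
  have htsum : ∑' k, P (E k) ≠ ⊤ := by
    refine ne_top_of_le_ne_top ?_ (ENNReal.tsum_le_tsum hPE)
    rw [← ENNReal.ofReal_tsum_of_nonneg (fun k => by positivity) hsummable]
    exact ENNReal.ofReal_ne_top
  have hBC : P (limsup E atTop) = 0 := measure_limsup_atTop_eq_zero htsum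
  have hae : ∀ᵐ ω ∂P, ∃ l : ℝ, Tendsto (fun k => X (φ k) ω) atTop (𝓝 l) := by
    have hae0 : ∀ᵐ ω ∂P, ω ∉ limsup E atTop := by
      rw [ae_iff]
      simpa using hBC
    filter_upwards [hae0] with ω hω
    rw [limsup_eq_iInf_iSup_of_nat] at hω
    simp only [Set.iInf_eq_iInter, Set.iSup_eq_iUnion, Set.mem_iInter, Set.mem_iUnion] at hω
    push_neg at hω
    obtain ⟨K, hK⟩ := hω
    have hdist : ∀ k, dist (X (φ (K + k)) ω) (X (φ (K + k + 1)) ω) ≤ (1/2:ℝ)^K * (1/2:ℝ)^k := by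
      intro k
      have h1 : ω ∉ E (K + k) := hK (K + k) (Nat.le_add_right _ _)
      rw [hEdef] at h1
      simp only [Set.mem_setOf_eq, not_le] at h1
      rw [Real.dist_eq, abs_sub_comm, ← pow_add]
      exact h1.le
    have hcs : CauchySeq (fun k => X (φ (K + k)) ω) :=
      cauchySeq_of_le_geometric (1/2) ((1/2:ℝ)^K) (by norm_num) hdist
    obtain ⟨l, hl⟩ := cauchySeq_tendsto_of_complete hcs
    refine ⟨l, ?_⟩
    have h2 : Tendsto (fun k => X (φ (k + K)) ω) atTop (𝓝 l) := by
      convert hl using 2 with k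
      rw [Nat.add_comm]
    exact (tendsto_add_atTop_iff_nat K).mp h2
  set L : Ω → ℝ := fun ω =>
    if h : ∃ l : ℝ, Tendsto (fun k => X (φ k) ω) atTop (𝓝 l) then h.choose else 0 with hLdef
  have haeL : ∀ᵐ ω ∂P, Tendsto (fun k => X (φ k) ω) atTop (𝓝 (L ω)) := by
    filter_upwards [hae] with ω hω
    rw [hLdef]
    simp only [dif_pos hω]
    exact hω.choose_spec
  have hsubTM : TendstoInMeasure P (fun k => X (φ k)) atTop L :=
    tendstoInMeasure_of_tendsto_ae (fun k => (hm (φ k)).aestronglyMeasurable) haeL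
  refine ⟨L, ?_⟩
  refine tendstoInMeasure_of_close P hsubTM ?_
  intro ε hε
  apply tendsto_zero_of_forall
  intro ρ hρ
  obtain ⟨N₁, hN₁⟩ := hc ε hε ρ hρ
  refine ⟨N₁, fun n hn => ?_⟩
  exact hN₁ n hn (φ n) (le_trans hn (hφge n))

end Stmt9Aux

open Stmt9Aux Topology

/-- A convex, closed, solid set `A ⊆ L⁰₊` is convexly compact iff it is radially bounded. -/
theorem stmt9 (P : Measure Ω) [IsProbabilityMeasure P] (A : Set (Ω → ℝ))
    (hL0 : ∀ X ∈ A, AEMeasurable X P) (hpos : ∀ X ∈ A, ∀ᵐ ω ∂P, 0 ≤ X ω)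
    (hconv : Convex ℝ A) (hclosed : ∀ X : Ω → ℝ, InClosure P A X → X ∈ A)
    (hsolid : Solid P A) :
    ConvexlyCompact P A ↔ RadiallyBoundedPos P A := by
    classical
  constructor
  · -- convexly compact → radially bounded
    intro hcc X hXA hXne
    by_contra hnot
    push_neg at hnot
    have hray : ∀ r : ℝ, 0 ≤ r → (fun ω => r * X ω) ∈ A := by
      intro r hr
      obtain ⟨l, hl, hlA⟩ := hnot (r + 1) (by linarith)
      refine hsolid _ hlA _ ?_
      filter_upwards [hpos X hXA] with ω hω
      exact ⟨mul_nonneg hr hω, mul_le_mul_of_nonneg_right (by linarith) hω⟩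
    set F : ℕ → Set (Ω → ℝ) := fun n => {Y | Y ∈ A ∧ ∀ᵐ ω ∂P, (n : ℝ) * X ω ≤ Y ω}
      with hFdef
    have hFA : ∀ n, F n ⊆ A := fun n Y hY => hY.1
    have hFconv : ∀ n, Convex ℝ (F n) := by
      intro n Y₁ hY₁ Y₂ hY₂ a b ha hb hab
      refine ⟨hconv hY₁.1 hY₂.1 ha hb hab, ?_⟩
      filter_upwards [hY₁.2, hY₂.2] with ω h₁ h₂
      have e : (a • Y₁ + b • Y₂) ω = a * Y₁ ω + b * Y₂ ω := rfl
      rw [e]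
      have q₁ := mul_le_mul_of_nonneg_left h₁ ha
      have q₂ := mul_le_mul_of_nonneg_left h₂ hb
      have q₃ : (n:ℝ) * X ω = a * ((n:ℝ) * X ω) + b * ((n:ℝ) * X ω) := by
        rw [← add_mul, hab, one_mul]
      linarith
    have hFclosed : ∀ n, ∀ Y : Ω → ℝ, InClosure P (F n) Y → Y ∈ F n := by
      intro n Y ⟨W, hWmem, hWtend⟩
      refine ⟨hclosed Y ⟨W, fun k => (hWmem k).1, hWtend⟩, ?_⟩
      obtain ⟨ns, hnsmono, haew⟩ := hWtend.exists_seq_tendsto_ae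
      have hball : ∀ᵐ ω ∂P, ∀ k : ℕ, (n : ℝ) * X ω ≤ W (ns k) ω :=
        ae_all_iff.mpr fun k => (hWmem (ns k)).2
      filter_upwards [haew, hball] with ω hlim hb
      exact ge_of_tendsto' hlim hb
    have hFfip : ∀ s : Finset ℕ, (⋂ n ∈ s, F n).Nonempty := by
      intro s
      refine ⟨fun ω => ((s.sup id : ℕ) : ℝ) * X ω, ?_⟩
      rw [Set.mem_iInter₂]
      intro n hn
      refine ⟨hray _ (by positivity), ?_⟩
      filter_upwards [hpos X hXA] with ω hω
      have : (n : ℝ) ≤ ((s.sup id : ℕ) : ℝ) := by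
        exact_mod_cast Finset.le_sup (f := id) hn
      exact mul_le_mul_of_nonneg_right this hω
    obtain ⟨Y, hY⟩ := hcc ℕ F hFA hFconv hFclosed hFfip
    have hb : ∀ᵐ ω ∂P, ∀ n : ℕ, (n : ℝ) * X ω ≤ Y ω :=
      ae_all_iff.mpr fun n => (Set.mem_iInter.mp hY n).2
    have hX0 : ∀ᵐ ω ∂P, ¬ (0 < X ω) := by
      filter_upwards [hb] with ω hω hx
      obtain ⟨n, hn⟩ := exists_nat_gt (Y ω / X ω)
      have h2 : Y ω / X ω * X ω < (n : ℝ) * X ω := by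
        exact mul_lt_mul_of_pos_right hn hx
      rw [div_mul_cancel₀ _ hx.ne'] at h2
      exact absurd (hω n) (not_le.mpr h2)
    have h0 := ae_iff.mp hX0
    simp only [not_not] at h0
    exact hXne h0
  · -- radially bounded → convexly compact
    intro hrb ι F hFA hFconv hFclosed hFfip
    have htight := tight_of_radiallyBounded P A hL0 hpos hconv hsolid hrb
    by_cases hι : IsEmpty ι
    · rw [Set.iInter_of_empty]
      exact ⟨fun _ => 0, Set.mem_univ _⟩
    obtain ⟨i₀⟩ := not_isEmpty_iff.mp hι
    have hAne : A.Nonempty := by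
      obtain ⟨x, hx⟩ := hFfip {i₀}
      exact ⟨x, hFA i₀ (Set.mem_iInter₂.mp hx i₀ (Finset.mem_singleton_self i₀))⟩
    set C : Finset ι → Set (Ω → ℝ) := fun s => A ∩ ⋂ i ∈ s, F i with hCdef
    have hCsubA : ∀ s, C s ⊆ A := fun s => Set.inter_subset_left
    have hCne : ∀ s, (C s).Nonempty := by
      intro s
      obtain ⟨x, hx⟩ := hFfip s
      rcases s.eq_empty_or_nonempty with rfl | ⟨i, hi⟩
      · obtain ⟨x₀, hx₀⟩ := hAne
        exact ⟨x₀, hx₀, by simp⟩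
      · exact ⟨x, hFA i (Set.mem_iInter₂.mp hx i hi), hx⟩
    have hCconv : ∀ s, Convex ℝ (C s) :=
      fun s => hconv.inter (convex_iInter fun i => convex_iInter fun _ => hFconv i)
    have hCmono : ∀ {s t : Finset ι}, s ⊆ t → C t ⊆ C s := by
      intro s t hst
      apply Set.inter_subset_inter le_rfl
      intro x hx
      rw [Set.mem_iInter₂] at hx ⊢
      exact fun i hi => hx i (hst hi)
    have hmemA : ∀ {s : Finset ι} {x}, x ∈ C s → AEMeasurable x P ∧ (∀ᵐ ω ∂P, 0 ≤ x ω) :=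
      fun {s x} hx => ⟨hL0 x (hCsubA s hx), hpos x (hCsubA s hx)⟩
    -- the value function
    set v : Finset ι → ℝ := fun s => sSup (J P '' C s) with hvdef
    have hvimne : ∀ s, (J P '' C s).Nonempty := fun s => (hCne s).image _
    have hvbdd : ∀ s, BddAbove (J P '' C s) := by
      intro s
      refine ⟨1, ?_⟩
      rintro r ⟨x, hx, rfl⟩
      exact J_le_one P (hL0 x (hCsubA s hx)) (hpos x (hCsubA s hx))
    have hv_ge : ∀ {s : Finset ι} {x}, x ∈ C s → J P x ≤ v s :=
      fun {s x} hx => le_csSup (hvbdd s) ⟨x, hx, rfl⟩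
    have hv_mono : ∀ {s t : Finset ι}, s ⊆ t → v t ≤ v s := by
      intro s t hst
      apply csSup_le (hvimne t)
      rintro r ⟨x, hx, rfl⟩
      exact hv_ge (hCmono hst hx)
    have hv_nonneg : ∀ s, 0 ≤ v s := by
      intro s
      obtain ⟨x, hx⟩ := hCne s
      exact le_trans (J_nonneg P (hpos x (hCsubA s hx))) (hv_ge hx)
    set c : ℝ := ⨅ s, v s with hcdef
    have hcbdd : BddBelow (Set.range v) := ⟨0, by rintro r ⟨s, rfl⟩; exact hv_nonneg s⟩
    have hc_le : ∀ s, c ≤ v s := fun s => ciInf_le hcbdd s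
    -- choose an increasing sequence of finsets with v close to c
    have hts : ∀ n : ℕ, ∃ s : Finset ι, v s < c + 1 / (n + 1) := by
      intro n
      have h1 : c < c + 1 / (n + 1) := by
        have : (0:ℝ) < 1 / (n + 1) := by positivity
        linarith
      exact exists_lt_of_ciInf_lt h1
    choose t ht using hts
    set sq : ℕ → Finset ι := fun n => (Finset.range (n + 1)).biUnion t with hsqdef
    have hsqmono : ∀ {m n : ℕ}, m ≤ n → sq m ⊆ sq n := by
      intro m n hmn
      apply Finset.biUnion_subset_biUnion_of_subset_left
      exact Finset.range_subset_range.mpr (by omega)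
    have htsq : ∀ n, t n ⊆ sq n := by
      intro n
      apply Finset.subset_biUnion_of_mem (u := t)
      exact Finset.self_mem_range_succ n
    have hsqv : ∀ n : ℕ, v (sq n) < c + 1 / (n + 1) :=
      fun n => lt_of_le_of_lt (hv_mono (htsq n)) (ht n)
    -- choose near-maximizers
    have hXs : ∀ n : ℕ, ∃ x ∈ C (sq n), v (sq n) - 1 / (n + 1) < J P x := by
      intro n
      have h1 : v (sq n) - 1 / (n + 1) < v (sq n) := by
        have : (0:ℝ) < 1 / (n + 1) := by positivity
        linarith
      obtain ⟨r, ⟨x, hx, rfl⟩, hr⟩ := exists_lt_of_lt_csSup (hvimne _) h1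
      exact ⟨x, hx, hr⟩
    choose X hXmem hXJ using hXs
    have hXlb : ∀ n : ℕ, c - 1 / (n + 1) < J P (X n) := by
      intro n
      have := hc_le (sq n)
      linarith [hXJ n]
    have hXub : ∀ n : ℕ, J P (X n) < c + 1 / (n + 1) :=
      fun n => lt_of_le_of_lt (hv_ge (hXmem n)) (hsqv n)
    -- the central two-point bound
    have hbound : ∀ ρ > (0:ℝ), ∀ ε > (0:ℝ), ∃ N : ℕ, ∀ n : ℕ, N ≤ n →
        ∀ Y W : Ω → ℝ, Y ∈ A → W ∈ A →
        c - 1 / (n + 1) < J P Y → c - 1 / (n + 1) < J P W →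
        J P (fun ω => (Y ω + W ω) / 2) < c + 1 / (n + 1) →
        P {ω | ε ≤ |Y ω - W ω|} ≤ ENNReal.ofReal ρ := by
      intro ρ hρ ε hε
      obtain ⟨M, hM, hMbd⟩ := htight (ρ / 4) (by linarith)
      set δ : ℝ := ε ^ 2 / (4 * (1 + M) ^ 3) with hδdef
      have hδpos : 0 < δ := by positivity
      obtain ⟨N, hN⟩ := exists_nat_gt (8 / (ρ * δ))
      refine ⟨N, fun n hn Y W hYA hWA hY hW hmid => ?_⟩
      have hη : (0:ℝ) ≤ 3 / (n + 1) := by positivity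
      have hJest : J P (fun ω => (Y ω + W ω) / 2) ≤ (J P Y + J P W) / 2 + 3 / (n + 1) := by
        have h0 : c - 1 / (n + 1) < (J P Y + J P W) / 2 := by linarith
        have h3 : 3 / ((n:ℝ) + 1) = 3 * (1 / ((n:ℝ) + 1)) := by ring
        linarith
      have hkey := key_estimate P (hL0 Y hYA) (hL0 W hWA) (hpos Y hYA) (hpos W hWA)
        hε hM hη hJest
      have hratio : 3 / ((n:ℝ) + 1) / δ ≤ ρ / 2 := by
        have hn1 : (N:ℝ) ≤ n := by exact_mod_cast hn
        have h8 : 8 / (ρ * δ) < (n:ℝ) + 1 := by linarith [hN]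
        rw [div_lt_iff₀ (by positivity)] at h8
        rw [div_div, div_le_div_iff₀ (by positivity) (by norm_num)]
        nlinarith [h8]
      calc P {ω | ε ≤ |Y ω - W ω|}
          ≤ ENNReal.ofReal (3 / (n+1) / δ) + (P {ω | M < Y ω} + P {ω | M < W ω}) := hkey
        _ ≤ ENNReal.ofReal (ρ/2) + (ENNReal.ofReal (ρ/4) + ENNReal.ofReal (ρ/4)) := by
            gcongr <;> first
              | exact hratio
              | exact ENNReal.ofReal_le_ofReal hratio
              | exact (hMbd Y hYA).le
              | exact (hMbd W hWA).le
        _ = ENNReal.ofReal (ρ/2) + ENNReal.ofReal (ρ/4 + ρ/4) := by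
            rw [ENNReal.ofReal_add (by linarith) (by linarith)]
        _ ≤ ENNReal.ofReal ρ := by
            rw [← ENNReal.ofReal_add (by linarith) (by linarith)]
            apply ENNReal.ofReal_le_ofReal
            linarith
    -- midpoints lie in the right sets
    have hmid_mem : ∀ {s : Finset ι} {x y : Ω → ℝ}, x ∈ C s → y ∈ C s →
        (fun ω => (x ω + y ω) / 2) ∈ C s := by
      intro s x y hx hy
      have heq : (fun ω => (x ω + y ω) / 2) = (1/2 : ℝ) • x + (1/2 : ℝ) • y := by
        funext ω
        show (x ω + y ω) / 2 = (1/2 : ℝ) * x ω + (1/2 : ℝ) * y ω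
        ring
      rw [heq]
      exact hCconv s hx hy (by norm_num) (by norm_num) (by norm_num)
    -- the Cauchy property
    have hcauchy : ∀ ε > (0:ℝ), ∀ ρ > (0:ℝ), ∃ N, ∀ m ≥ N, ∀ n ≥ N,
        P {ω | ε ≤ |X n ω - X m ω|} ≤ ENNReal.ofReal ρ := by
      intro ε hε ρ hρ
      obtain ⟨N, hN⟩ := hbound ρ hρ ε hε
      refine ⟨N, fun m hm n hn => ?_⟩
      set k := min n m with hkdef
      have hkN : N ≤ k := le_min hn hm
      have hXn : X n ∈ C (sq k) := hCmono (hsqmono (min_le_left n m)) (hXmem n)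
      have hXm : X m ∈ C (sq k) := hCmono (hsqmono (min_le_right n m)) (hXmem m)
      have hmono1 : (1:ℝ) / (n + 1) ≤ 1 / (k + 1) := by
        apply one_div_le_one_div_of_le (by positivity)
        have : (k:ℝ) ≤ n := by exact_mod_cast min_le_left n m
        linarith
      have hmono2 : (1:ℝ) / (m + 1) ≤ 1 / (k + 1) := by
        apply one_div_le_one_div_of_le (by positivity)
        have : (k:ℝ) ≤ m := by exact_mod_cast min_le_right n m
        linarith
      refine hN k hkN (X n) (X m) (hCsubA _ (hXmem n)) (hCsubA _ (hXmem m)) ?_ ?_ ?_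
      · linarith [hXlb n]
      · linarith [hXlb m]
      · have h1 := hv_ge (hmid_mem hXn hXm)
        linarith [hsqv k]
    obtain ⟨L, hL⟩ := exists_tendstoInMeasure_of_cauchy P
      (fun n => hL0 _ (hCsubA _ (hXmem n))) hcauchy
    refine ⟨L, Set.mem_iInter.mpr fun i => ?_⟩
    -- for each i, find companions in C (sq n ∪ {i})
    have hZs : ∀ n : ℕ, ∃ z ∈ C (insert i (sq n)), v (insert i (sq n)) - 1 / (n + 1) < J P z := by
      intro n
      have h1 : v (insert i (sq n)) - 1 / (n + 1) < v (insert i (sq n)) := by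
        have : (0:ℝ) < 1 / (n + 1) := by positivity
        linarith
      obtain ⟨r, ⟨z, hz, rfl⟩, hr⟩ := exists_lt_of_lt_csSup (hvimne _) h1
      exact ⟨z, hz, hr⟩
    choose Z hZmem hZJ using hZs
    have hZlb : ∀ n : ℕ, c - 1 / (n + 1) < J P (Z n) := by
      intro n
      have := hc_le (insert i (sq n))
      linarith [hZJ n]
    have hZC : ∀ n, Z n ∈ C (sq n) := fun n => hCmono (Finset.subset_insert i (sq n)) (hZmem n)
    have hZF : ∀ n, Z n ∈ F i := by
      intro n
      have := (hZmem n).2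
      exact Set.mem_iInter₂.mp this i (Finset.mem_insert_self i _)
    have hclose : ∀ ε > (0:ℝ), Tendsto (fun n => P {ω | ε ≤ |X n ω - Z n ω|}) atTop (𝓝 0) := by
      intro ε hε
      apply tendsto_zero_of_forall
      intro ρ hρ
      obtain ⟨N, hN⟩ := hbound ρ hρ ε hε
      refine ⟨N, fun n hn => ?_⟩
      refine hN n hn (X n) (Z n) (hCsubA _ (hXmem n)) (hCsubA _ (hZC n)) (hXlb n) (hZlb n) ?_
      have h1 := hv_ge (hmid_mem (hXmem n) (hZC n))
      linarith [hsqv n]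
    exact hFclosed i L ⟨Z, hZF, tendstoInMeasure_of_close P hL hclose⟩
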